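/- For all real Δt with 0 ≤ Δt ≤ 1/8: π/2 + arcsin(1/2 + 3·Δt) − 8·arcsin( ((√6 − √2)/4 − 2Δt)/(1 + 2Δt) ) ≤ 43·Δt. -/

import Mathlib

open Real

private lemma sin_lb' {u : ℝ} (h0 : 0 ≤ u) (h1 : u ≤ 1) : u - u ^ 3 / 4 ≤ Real.sin u := by
  rcases eq_or_lt_of_le h0 with h | h
  · simp [← h]
  · have := Real.sin_gt_sub_cube h; linarith [pow_pos h 3]

private lemma sqrt2_sq : Real.sqrt 2 ^ 2 = 2 := Real.sq_sqrt (by norm_num)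
private lemma sqrt3_sq : Real.sqrt 3 ^ 2 = 3 := Real.sq_sqrt (by norm_num)
private lemma sqrt6_sq : Real.sqrt 6 ^ 2 = 6 := Real.sq_sqrt (by norm_num)

private lemma sqrt2_lb : (1.41:ℝ) ≤ Real.sqrt 2 := by
  nlinarith [sqrt2_sq, Real.sqrt_nonneg 2]
private lemma sqrt2_ub : Real.sqrt 2 ≤ 1.42 := by
  nlinarith [sqrt2_sq, Real.sqrt_nonneg 2]
private lemma sqrt3_lb : (1.7:ℝ) ≤ Real.sqrt 3 := by
  nlinarith [sqrt3_sq, Real.sqrt_nonneg 3]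
private lemma sqrt3_ub : Real.sqrt 3 ≤ 1.8 := by
  nlinarith [sqrt3_sq, Real.sqrt_nonneg 3]
private lemma sqrt6_lb : (2.44:ℝ) ≤ Real.sqrt 6 := by
  nlinarith [sqrt6_sq, Real.sqrt_nonneg 6]
private lemma sqrt6_ub : Real.sqrt 6 ≤ 2.45 := by
  nlinarith [sqrt6_sq, Real.sqrt_nonneg 6]

private lemma sin_pi12 : Real.sin (π / 12) = (Real.sqrt 6 - Real.sqrt 2) / 4 := by
  have h : (π:ℝ) / 12 = π / 3 - π / 4 := by ring
  have h6 : Real.sqrt 6 = Real.sqrt 3 * Real.sqrt 2 := by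
    rw [← Real.sqrt_mul (by norm_num : (0:ℝ) ≤ 3)]; norm_num
  rw [h, Real.sin_sub, Real.sin_pi_div_three, Real.cos_pi_div_four,
    Real.cos_pi_div_three, Real.sin_pi_div_four, h6]
  ring

private lemma cos_pi12 : Real.cos (π / 12) = (Real.sqrt 6 + Real.sqrt 2) / 4 := by
  have h : (π:ℝ) / 12 = π / 3 - π / 4 := by ring
  have h6 : Real.sqrt 6 = Real.sqrt 3 * Real.sqrt 2 := by
    rw [← Real.sqrt_mul (by norm_num : (0:ℝ) ≤ 3)]; norm_num
  rw [h, Real.cos_sub, Real.sin_pi_div_three, Real.cos_pi_div_four,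
    Real.cos_pi_div_three, Real.sin_pi_div_four, h6]
  ring

/-- The final estimate inside Lemma 13 of the paper: for `0 ≤ Δt ≤ 1/8`,
`π/2 + arcsin(1/2 + 3Δt) − 8·arcsin(((√6 − √2)/4 − 2Δt)/(1 + 2Δt)) ≤ 43·Δt`. -/
theorem stmt_16 (Δt : ℝ) (hΔt₀ : 0 ≤ Δt) (hΔt₁ : Δt ≤ 1/8) :
    π / 2 + Real.arcsin (1/2 + 3 * Δt) -
        8 * Real.arcsin (((Real.sqrt 6 - Real.sqrt 2) / 4 - 2 * Δt) / (1 + 2 * Δt))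
      ≤ 43 * Δt := by
  have hπ3 := Real.pi_gt_three
  have hπ4 := Real.pi_lt_d2
  -- Upper bound on the first arcsin: arcsin (1/2 + 3Δt) ≤ π/6 + 5Δt
  have hA : Real.arcsin (1/2 + 3 * Δt) ≤ π / 6 + 5 * Δt := by
    rw [Real.arcsin_le_iff_le_sin (by constructor <;> nlinarith)
      (by constructor <;> [nlinarith; nlinarith])]
    have hsum : π / 6 + 5 * Δt = π / 6 + 5 * Δt := rfl
    rw [show π / 6 + 5 * Δt = π / 6 + 5 * Δt from rfl, Real.sin_add,
      Real.sin_pi_div_six, Real.cos_pi_div_six]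
    have hc := Real.one_sub_sq_div_two_le_cos (x := 5 * Δt)
    have hs := sin_lb' (u := 5 * Δt) (by linarith) (by linarith)
    nlinarith [sqrt3_lb, sqrt3_ub,
      mul_le_mul_of_nonneg_left hs (by positivity : (0:ℝ) ≤ Real.sqrt 3 / 2),
      mul_nonneg hΔt₀ hΔt₀,
      mul_nonneg hΔt₀ (by linarith : (0:ℝ) ≤ 1/8 - Δt),
      mul_nonneg (mul_nonneg hΔt₀ hΔt₀) (by linarith : (0:ℝ) ≤ 1/8 - Δt),
      mul_nonneg (mul_nonneg hΔt₀ hΔt₀) hΔt₀]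
  -- Lower bound on the second arcsin
  set s : ℝ := (Real.sqrt 6 - Real.sqrt 2) / 4 with hs_def
  have hs_lb : (0.25:ℝ) ≤ s := by rw [hs_def]; nlinarith [sqrt6_lb, sqrt2_ub]
  have hs_ub : s ≤ 0.26 := by rw [hs_def]; nlinarith [sqrt6_ub, sqrt2_lb]
  have hden : (0:ℝ) < 1 + 2 * Δt := by linarith
  have hB : π / 12 - (19/4) * Δt ≤ Real.arcsin ((s - 2 * Δt) / (1 + 2 * Δt)) := by
    rw [Real.le_arcsin_iff_sin_le (by constructor <;> nlinarith)
      (by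
        constructor
        · have h0 : (0:ℝ) ≤ (s - 2 * Δt) / (1 + 2 * Δt) :=
            div_nonneg (by linarith) (by linarith)
          linarith
        · exact div_le_one_of_le₀ (by linarith) (by linarith))]
    rw [le_div_iff₀ hden]
    have h12 : π / 12 - (19/4) * Δt = π / 12 - (19/4) * Δt := rfl
    rw [Real.sin_sub, sin_pi12, cos_pi12]
    have hu0 : (0:ℝ) ≤ (19/4) * Δt := by linarith
    have hu1 : (19/4) * Δt ≤ 1 := by linarith
    have hc1 : Real.cos ((19/4) * Δt) ≤ 1 := Real.cos_le_one _
    have hsl := sin_lb' hu0 hu1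
    have hsnn : 0 ≤ Real.sin ((19/4) * Δt) :=
      Real.sin_nonneg_of_nonneg_of_le_pi hu0 (by nlinarith)
    have hc_lb : (0.96:ℝ) ≤ (Real.sqrt 6 + Real.sqrt 2) / 4 := by
      nlinarith [sqrt6_lb, sqrt2_lb]
    have hs_eq : (Real.sqrt 6 - Real.sqrt 2) / 4 = s := rfl
    rw [hs_eq]
    nlinarith [mul_nonneg hΔt₀ hΔt₀, mul_nonneg (mul_nonneg hΔt₀ hΔt₀) hΔt₀,
      mul_le_of_le_one_right (by linarith : (0:ℝ) ≤ s) hc1,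
      mul_le_mul_of_nonneg_right hsl (by linarith : (0:ℝ) ≤ (1:ℝ)),
      mul_nonneg hsnn hΔt₀]
  linarith
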